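/- There exists a constant C₄ > 0 such that f′(x)/f(x) ≥ C₄ (1−x)^(−1−κ) for all x ∈ (1/2, 1), where f(M) = √(q(M)/p(M)). -/

import Mathlib

set_option maxHeartbeats 1000000

open Real Set MeasureTheory Filter

/-- `q(M) = (p(M)/M) ∫₀^M s^a / ((1-s)^b p(s)²) ds`. -/
noncomputable def qfun (p : ℝ → ℝ) (a b : ℝ) (M : ℝ) : ℝ :=
  p M / M * ∫ s in (0:ℝ)..M, s ^ a / ((1 - s) ^ b * p s ^ 2)

noncomputable def gaux (p : ℝ → ℝ) (a b : ℝ) (s : ℝ) : ℝ :=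
  s ^ a / ((1 - s) ^ b * p s ^ 2)

noncomputable def Iaux (p : ℝ → ℝ) (a b : ℝ) (M : ℝ) : ℝ :=
  ∫ s in (0:ℝ)..M, gaux p a b s

noncomputable def Daux (p : ℝ → ℝ) (b s : ℝ) : ℝ := (1 - s) ^ b * p s ^ 2

noncomputable def Daux' (p p' : ℝ → ℝ) (b s : ℝ) : ℝ :=
  -(b * (1 - s) ^ (b - 1)) * p s ^ 2 + (1 - s) ^ b * (2 * p s * p' s)

lemma onesub_kappa_tendsto {κ : ℝ} (hκ : 0 < κ) :
    Filter.Tendsto (fun M : ℝ => (1 - M) ^ κ) (nhdsWithin 1 (Iio 1)) (nhds 0) := by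
  have hcont : Continuous (fun M : ℝ => 1 - M) := continuous_const.sub continuous_id
  have h2 : Filter.Tendsto (fun M : ℝ => 1 - M) (nhdsWithin 1 (Iio 1)) (nhds 0) := by
    have := (hcont.tendsto (1:ℝ)).mono_left (nhdsWithin_le_nhds (s := Iio (1:ℝ)))
    simpa using this
  have h3 : ContinuousAt (fun x : ℝ => x ^ κ) 0 :=
    Real.continuousAt_rpow_const 0 κ (Or.inr hκ.le)
  have h4 := h3.tendsto.comp h2
  rwa [Real.zero_rpow hκ.ne'] at h4

section helpers
variable {p p' : ℝ → ℝ} {a b κ c : ℝ}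

variable {p : ℝ → ℝ} {a b : ℝ}

lemma cont_rpow_const (ha : 0 < a) : Continuous (fun s : ℝ => s ^ a) :=
  continuous_id.rpow_const fun _ => Or.inr ha.le

lemma cont_onesub_rpow (hb : 0 < b) : Continuous (fun s : ℝ => (1 - s) ^ b) :=
  (continuous_const.sub continuous_id).rpow_const fun _ => Or.inr hb.le

lemma denom_pos (hppos : ∀ M ∈ Ico (0:ℝ) 1, 0 < p M) {s : ℝ} (hs : s ∈ Ico (0:ℝ) 1) :
    0 < (1 - s) ^ b * p s ^ 2 := by
  have h1 : 0 < 1 - s := by linarith [hs.2]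
  have := hppos s hs
  positivity

lemma gaux_contOn (ha : 0 < a) (hb : 0 < b) (hpc : ContinuousOn p (Icc 0 1))
    (hppos : ∀ M ∈ Ico (0:ℝ) 1, 0 < p M) :
    ContinuousOn (gaux p a b) (Ico 0 1) := by
  apply ContinuousOn.div
  · exact (cont_rpow_const ha).continuousOn
  · exact (cont_onesub_rpow hb).continuousOn.mul ((hpc.mono Ico_subset_Icc_self).pow 2)
  · exact fun s hs => (denom_pos hppos hs).ne'

lemma p_contAt (hpc : ContinuousOn p (Icc 0 1)) {x : ℝ} (hx : x ∈ Ioo (0:ℝ) 1) :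
    ContinuousAt p x :=
  (hpc x ⟨hx.1.le, hx.2.le⟩).continuousAt (Icc_mem_nhds hx.1 hx.2)

lemma gaux_contAt (ha : 0 < a) (hb : 0 < b) (hpc : ContinuousOn p (Icc 0 1))
    (hppos : ∀ M ∈ Ico (0:ℝ) 1, 0 < p M) {x : ℝ} (hx : x ∈ Ioo (0:ℝ) 1) :
    ContinuousAt (gaux p a b) x := by
  have hpx := p_contAt hpc hx
  exact ContinuousAt.div (cont_rpow_const ha).continuousAt
    ((cont_onesub_rpow hb).continuousAt.mul (hpx.pow 2))
    (denom_pos hppos ⟨hx.1.le, hx.2⟩).ne'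

lemma gaux_nonneg (hppos : ∀ M ∈ Ico (0:ℝ) 1, 0 < p M) {s : ℝ} (hs : s ∈ Ico (0:ℝ) 1) :
    0 ≤ gaux p a b s := by
  have h := denom_pos (b := b) hppos hs
  have hs0 : (0:ℝ) ≤ s ^ a := Real.rpow_nonneg hs.1 a
  exact div_nonneg hs0 h.le

lemma gaux_pos (ha : 0 < a) (hppos : ∀ M ∈ Ico (0:ℝ) 1, 0 < p M)
    {s : ℝ} (hs : s ∈ Ioo (0:ℝ) 1) : 0 < gaux p a b s := by
  have h := denom_pos (b := b) hppos ⟨hs.1.le, hs.2⟩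
  have hs0 : (0:ℝ) < s ^ a := Real.rpow_pos_of_pos hs.1 a
  exact div_pos hs0 h

lemma gaux_mono (ha : 0 ≤ a) (hb : 0 ≤ b) (hpa : AntitoneOn p (Icc 0 1))
    (hppos : ∀ M ∈ Ico (0:ℝ) 1, 0 < p M) :
    MonotoneOn (gaux p a b) (Ico 0 1) := by
  intro s hs t ht hst
  have h1t : 0 < 1 - t := by linarith [ht.2]
  have h1st : 1 - t ≤ 1 - s := by linarith
  have hpt := hppos t ht
  have hps := hppos s hs
  have hnum : s ^ a ≤ t ^ a := Real.rpow_le_rpow hs.1 hst ha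
  have hden : (1 - t) ^ b * p t ^ 2 ≤ (1 - s) ^ b * p s ^ 2 := by
    have h1 : (1 - t) ^ b ≤ (1 - s) ^ b := Real.rpow_le_rpow h1t.le h1st hb
    have h2 : p t ^ 2 ≤ p s ^ 2 := by
      have := hpa ⟨hs.1, by linarith [hs.2]⟩ ⟨by linarith [hs.1], by linarith [ht.2]⟩ hst
      nlinarith [hpt.le]
    have h1t' : (0:ℝ) ≤ (1 - t) ^ b := Real.rpow_nonneg h1t.le b
    nlinarith [sq_nonneg (p t), Real.rpow_nonneg (by linarith [hs.2] : (0:ℝ) ≤ 1 - s) b]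
  exact div_le_div₀ (Real.rpow_nonneg (hs.1.trans hst) a) hnum (denom_pos hppos ht) hden

lemma gaux_integrable (ha : 0 < a) (hb : 0 < b) (hpc : ContinuousOn p (Icc 0 1))
    (hppos : ∀ M ∈ Ico (0:ℝ) 1, 0 < p M) {u v : ℝ} (hu : u ∈ Ico (0:ℝ) 1)
    (hv : v ∈ Ico (0:ℝ) 1) :
    IntervalIntegrable (gaux p a b) volume u v := by
  apply ContinuousOn.intervalIntegrable
  apply (gaux_contOn ha hb hpc hppos).mono
  exact Set.ordConnected_Ico.uIcc_subset hu hv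


lemma int_hasDerivAt (ha : 0 < a) (hb : 0 < b) (hpc : ContinuousOn p (Icc 0 1))
    (hppos : ∀ M ∈ Ico (0:ℝ) 1, 0 < p M) {t x : ℝ} (ht : t ∈ Ico (0:ℝ) 1)
    (hx : x ∈ Ioo (0:ℝ) 1) :
    HasDerivAt (fun u => ∫ s in t..u, gaux p a b s) (gaux p a b x) x := by
  refine intervalIntegral.integral_hasDerivAt_right
    (gaux_integrable ha hb hpc hppos ht ⟨hx.1.le, hx.2⟩) ?_ (gaux_contAt ha hb hpc hppos hx)
  exact (((gaux_contOn ha hb hpc hppos).mono Ioo_subset_Ico_self).stronglyMeasurableAtFilter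
    isOpen_Ioo) x hx

lemma Iaux_hasDerivAt (ha : 0 < a) (hb : 0 < b) (hpc : ContinuousOn p (Icc 0 1))
    (hppos : ∀ M ∈ Ico (0:ℝ) 1, 0 < p M) {x : ℝ} (hx : x ∈ Ioo (0:ℝ) 1) :
    HasDerivAt (Iaux p a b) (gaux p a b x) x :=
  int_hasDerivAt ha hb hpc hppos ⟨le_rfl, one_pos⟩ hx

lemma Iaux_pos (ha : 0 < a) (hb : 0 < b) (hpc : ContinuousOn p (Icc 0 1))
    (hppos : ∀ M ∈ Ico (0:ℝ) 1, 0 < p M) {x : ℝ} (hx : x ∈ Ioo (0:ℝ) 1) :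
    0 < Iaux p a b x := by
  refine intervalIntegral.intervalIntegral_pos_of_pos_on
    (gaux_integrable ha hb hpc hppos ⟨le_rfl, one_pos⟩ ⟨hx.1.le, hx.2⟩) ?_ hx.1
  exact fun s hs => gaux_pos ha hppos ⟨hs.1, hs.2.trans hx.2⟩

lemma Iaux_mono (ha : 0 < a) (hb : 0 < b) (hpc : ContinuousOn p (Icc 0 1))
    (hppos : ∀ M ∈ Ico (0:ℝ) 1, 0 < p M) {x y : ℝ} (hx : x ∈ Ico (0:ℝ) 1)
    (hy : y ∈ Ico (0:ℝ) 1) (hxy : x ≤ y) : Iaux p a b x ≤ Iaux p a b y := by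
  have h1 := intervalIntegral.integral_add_adjacent_intervals
    (gaux_integrable ha hb hpc hppos ⟨le_rfl, one_pos⟩ hx)
    (gaux_integrable ha hb hpc hppos hx hy)
  have h2 : 0 ≤ ∫ s in x..y, gaux p a b s := by
    refine intervalIntegral.integral_nonneg hxy fun u hu => ?_
    exact gaux_nonneg hppos ⟨hx.1.trans hu.1, lt_of_le_of_lt hu.2 hy.2⟩
  unfold Iaux
  linarith [h1]

lemma middle_bound (ha : 0 < a) (hb : 0 < b) (hpc : ContinuousOn p (Icc 0 1))
    (hpa : AntitoneOn p (Icc 0 1)) (hppos : ∀ M ∈ Ico (0:ℝ) 1, 0 < p M)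
    {x : ℝ} (hx : x ∈ Ico (1/2 : ℝ) 1) :
    (1/4) * (gaux p a b (1/2) - gaux p a b (1/4)) ≤ x * gaux p a b x - Iaux p a b x := by
  have hx1 : x ∈ Ico (0:ℝ) 1 := ⟨by linarith [hx.1], hx.2⟩
  have hq : (1/4 : ℝ) ∈ Ico (0:ℝ) 1 := by norm_num
  have hh : (1/2 : ℝ) ∈ Ico (0:ℝ) 1 := by norm_num
  have hmono := gaux_mono ha.le hb.le hpa hppos
  have hsplit := intervalIntegral.integral_add_adjacent_intervals
    (gaux_integrable ha hb hpc hppos ⟨le_rfl, one_pos⟩ hq)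
    (gaux_integrable ha hb hpc hppos hq hx1)
  have hI1 : (∫ s in (0:ℝ)..(1/4), gaux p a b s) ≤ (1/4) * gaux p a b (1/4) := by
    have := intervalIntegral.integral_mono_on (by norm_num : (0:ℝ) ≤ 1/4)
      (gaux_integrable ha hb hpc hppos ⟨le_rfl, one_pos⟩ hq)
      (intervalIntegrable_const (c := gaux p a b (1/4)))
      (fun s hs => hmono ⟨hs.1, by linarith [hs.2]⟩ hq hs.2)
    simpa using this
  have hI2 : (∫ s in (1/4 : ℝ)..x, gaux p a b s) ≤ (x - 1/4) * gaux p a b x := by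
    have := intervalIntegral.integral_mono_on (by linarith [hx.1] : (1/4:ℝ) ≤ x)
      (gaux_integrable ha hb hpc hppos hq hx1)
      (intervalIntegrable_const (c := gaux p a b x))
      (fun s hs => hmono ⟨by linarith [hs.1], lt_of_le_of_lt hs.2 hx.2⟩ hx1 hs.2)
    simpa using this
  have hgx : gaux p a b (1/2) ≤ gaux p a b x := hmono hh hx1 hx.1
  have hg14 : gaux p a b (1/4) ≤ gaux p a b x := hmono hq hx1 (by linarith [hx.1])
  unfold Iaux
  nlinarith [hx.1, hx.2]

lemma delta_pos (ha : 0 < a) (hb : 0 ≤ b) (hpa : AntitoneOn p (Icc 0 1))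
    (hppos : ∀ M ∈ Ico (0:ℝ) 1, 0 < p M) :
    gaux p a b (1/4) < gaux p a b (1/2) := by
  have hq : (1/4 : ℝ) ∈ Ico (0:ℝ) 1 := by norm_num
  have hh : (1/2 : ℝ) ∈ Ico (0:ℝ) 1 := by norm_num
  have hnum : (1/4 : ℝ) ^ a < (1/2 : ℝ) ^ a :=
    Real.rpow_lt_rpow (by norm_num) (by norm_num) ha
  have hD2 := denom_pos (b := b) hppos hh
  have hD4 := denom_pos (b := b) hppos hq
  have hden : (1 - (1/2:ℝ)) ^ b * p (1/2) ^ 2 ≤ (1 - (1/4:ℝ)) ^ b * p (1/4) ^ 2 := by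
    have h1 : ((1:ℝ) - 1/2) ^ b ≤ ((1:ℝ) - 1/4) ^ b :=
      Real.rpow_le_rpow (by norm_num) (by norm_num) hb
    have h2 : p (1/2) ^ 2 ≤ p (1/4) ^ 2 := by
      have := hpa (by norm_num : (1/4:ℝ) ∈ Icc (0:ℝ) 1) (by norm_num : (1/2:ℝ) ∈ Icc (0:ℝ) 1)
        (by norm_num)
      nlinarith [(hppos (1/2) hh).le]
    have h3 : (0:ℝ) ≤ ((1:ℝ) - 1/2) ^ b := Real.rpow_nonneg (by norm_num) b
    nlinarith [sq_nonneg (p (1/2))]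
  calc gaux p a b (1/4) = (1/4:ℝ)^a / ((1 - (1/4:ℝ)) ^ b * p (1/4) ^ 2) := rfl
    _ < (1/2:ℝ)^a / ((1 - (1/4:ℝ)) ^ b * p (1/4) ^ 2) := by
        exact div_lt_div_of_pos_right hnum hD4
    _ ≤ gaux p a b (1/2) := div_le_div₀ (Real.rpow_nonneg (by norm_num) a) le_rfl hD2 hden



lemma p_hasDerivAt (hp' : ∀ M ∈ Ico (0:ℝ) 1, HasDerivWithinAt p (p' M) (Ico 0 1) M)
    {x : ℝ} (hx : x ∈ Ioo (0:ℝ) 1) : HasDerivAt p (p' x) x :=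
  (hp' x ⟨hx.1.le, hx.2⟩).hasDerivAt (Ico_mem_nhds (by linarith [hx.1]) hx.2)

lemma onesub_rpow_hasDerivAt {r : ℝ} {x : ℝ} (hx : x < 1) :
    HasDerivAt (fun s : ℝ => (1 - s) ^ r) (-(r * (1 - x) ^ (r - 1))) x := by
  have h0 : HasDerivAt (fun s : ℝ => 1 - s) (-1) x := (hasDerivAt_id x).const_sub 1
  have h2 := (Real.hasDerivAt_rpow_const (p := r)
    (Or.inl (by linarith : (0:ℝ) < 1 - x).ne')).comp x h0
  have h3 : HasDerivAt (fun s : ℝ => (1 - s) ^ r) _ x := h2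
  simpa [mul_comm] using h3

lemma D_hasDerivAt (hp' : ∀ M ∈ Ico (0:ℝ) 1, HasDerivWithinAt p (p' M) (Ico 0 1) M)
    {x : ℝ} (hx : x ∈ Ioo (0:ℝ) 1) :
    HasDerivAt (fun s => Daux p b s) (Daux' p p' b x) x := by
  have hpd := p_hasDerivAt hp' hx
  have hp2 : HasDerivAt (fun s => p s ^ 2) (2 * p x * p' x) x := by
    have h3 : HasDerivAt (fun s => p s ^ 2) _ x := hpd.pow 2
    simpa [pow_one, mul_comm, mul_assoc] using h3
  have h3 : HasDerivAt (fun s => (1 - s) ^ b * p s ^ 2) _ x :=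
    (onesub_rpow_hasDerivAt (r := b) hx.2).mul hp2
  simpa [Daux, Daux'] using h3

lemma phi_hasDerivAt (hp' : ∀ M ∈ Ico (0:ℝ) 1, HasDerivWithinAt p (p' M) (Ico 0 1) M)
    (hppos : ∀ M ∈ Ico (0:ℝ) 1, 0 < p M) {x : ℝ} (hx : x ∈ Ioo (0:ℝ) 1) :
    HasDerivAt (fun s => (Daux p b s)⁻¹) (-(Daux' p p' b x) / (Daux p b x) ^ 2) x := by
  have hD : (0:ℝ) < Daux p b x := by
    have h1 : 0 < 1 - x := by linarith [hx.2]
    have := hppos x ⟨hx.1.le, hx.2⟩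
    unfold Daux; positivity
  exact (D_hasDerivAt hp' hx).inv hD.ne'

lemma key_ineq {s : ℝ} (hs : s ∈ Ioo (0:ℝ) 1) (hps : 0 < p s) (hκ : 0 < κ) (hc : 0 < c)
    (hb : 0 ≤ b)
    (hsl : p' s ≤ -((c/2) * (1 - s) ^ (-1 - κ) * p s)) :
    c * (1 - s) ^ (-1 - κ) * (Daux p b s)⁻¹ ≤ -(Daux' p p' b s) / (Daux p b s) ^ 2 := by
  have h1 : 0 < 1 - s := by linarith [hs.2]
  set X := (1 - s) ^ b with hX
  set Y := (1 - s) ^ (b - 1) with hY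
  set E := (1 - s) ^ (-1 - κ) with hE
  have hXpos : 0 < X := Real.rpow_pos_of_pos h1 b
  have hYpos : 0 < Y := Real.rpow_pos_of_pos h1 (b - 1)
  have hEpos : 0 < E := Real.rpow_pos_of_pos h1 (-1 - κ)
  have hDpos : 0 < Daux p b s := by unfold Daux; rw [← hX]; positivity
  have heq : c * E * (Daux p b s)⁻¹ = (c * E * Daux p b s) / (Daux p b s) ^ 2 := by
    field_simp
  rw [heq, div_le_div_iff_of_pos_right (by positivity : (0:ℝ) < (Daux p b s) ^ 2)]
  have key := mul_le_mul_of_nonneg_left hsl (by positivity : (0:ℝ) ≤ 2 * X * p s)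
  unfold Daux Daux'
  rw [← hX, ← hY]
  nlinarith [key, mul_nonneg (mul_nonneg hb hYpos.le) (sq_nonneg (p s))]



lemma p_contOn_Ico (hpc : ContinuousOn p (Icc 0 1)) : ContinuousOn p (Ico 0 1) :=
  hpc.mono Ico_subset_Icc_self

lemma Daux_contOn (hpc : ContinuousOn p (Icc 0 1)) :
    ContinuousOn (fun s => Daux p b s) (Ico 0 1) := by
  apply ContinuousOn.mul
  · exact ((continuous_const.sub continuous_id).continuousOn).rpow_const
      (fun x hx => Or.inl (by simp at hx; intro h; nlinarith [hx.2] : (1:ℝ) - x ≠ 0))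
  · exact (p_contOn_Ico hpc).pow 2

lemma Daux'_contOn (hpc : ContinuousOn p (Icc 0 1)) (hp'c : ContinuousOn p' (Ico 0 1)) :
    ContinuousOn (fun s => Daux' p p' b s) (Ico 0 1) := by
  have h1 : ∀ x ∈ Ico (0:ℝ) 1, (1:ℝ) - x ≠ 0 := fun x hx => by
    have : x < 1 := hx.2; intro h; linarith [this]
  apply ContinuousOn.add
  · exact (continuousOn_const.mul ((continuous_const.sub continuous_id).continuousOn.rpow_const
      (fun x hx => Or.inl (h1 x hx)))).neg.mul ((p_contOn_Ico hpc).pow 2)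
  · exact ((continuous_const.sub continuous_id).continuousOn.rpow_const
      (fun x hx => Or.inl (h1 x hx))).mul
      ((continuousOn_const.mul (p_contOn_Ico hpc)).mul hp'c)

lemma tail_integral_bound (ha : 1 ≤ a) (hb : 1 ≤ b)
    (hpc : ContinuousOn p (Icc 0 1)) (hppos : ∀ M ∈ Ico (0:ℝ) 1, 0 < p M)
    (hp' : ∀ M ∈ Ico (0:ℝ) 1, HasDerivWithinAt p (p' M) (Ico 0 1) M)
    (hp'c : ContinuousOn p' (Ico 0 1)) (hκ : 0 < κ) (hc : 0 < c)
    {M₀ M : ℝ} (hM₀ : 1/2 < M₀) (hM0 : M₀ ≤ M) (hM1 : M < 1)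
    (hsl : ∀ s ∈ Ico M₀ (1:ℝ), p' s ≤ -((c/2) * (1 - s) ^ (-1 - κ) * p s))
    (hsmall : ∀ s ∈ Ico M₀ (1:ℝ), 2 * (1 + κ) / c * (1 - s) ^ κ ≤ 1) :
    Iaux p a b M ≤ Iaux p a b M₀ + 2 / c * ((1 - M) ^ (1 + κ) * (Daux p b M)⁻¹) := by
  have ha0 : (0:ℝ) < a := lt_of_lt_of_le one_pos ha
  have hb0 : (0:ℝ) < b := lt_of_lt_of_le one_pos hb
  have hsub : Icc M₀ M ⊆ Ioo (0:ℝ) 1 :=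
    fun u hu => ⟨by linarith [hu.1], lt_of_le_of_lt hu.2 hM1⟩
  have hsubI : Icc M₀ M ⊆ Ico (0:ℝ) 1 := fun u hu => ⟨(hsub hu).1.le, (hsub hu).2⟩
  set G' : ℝ → ℝ := fun u => 2/c * (-((1 + κ) * (1 - u) ^ ((1 + κ) - 1)) * (Daux p b u)⁻¹
      + (1 - u) ^ (1 + κ) * (-(Daux' p p' b u) / (Daux p b u) ^ 2)) - gaux p a b u with hG'
  have hG : ∀ u ∈ Icc M₀ M,
      HasDerivAt (fun v => 2/c * ((1 - v) ^ (1 + κ) * (Daux p b v)⁻¹) - Iaux p a b v)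
        (G' u) u := by
    intro u hu
    have hu' := hsub hu
    exact (((onesub_rpow_hasDerivAt (r := 1 + κ) hu'.2).mul
      (phi_hasDerivAt hp' hppos hu')).const_mul (2/c)).sub
      (Iaux_hasDerivAt ha0 hb0 hpc hppos hu')
  have hG'cont : ContinuousOn G' (Icc M₀ M) := by
    have h1 : ∀ x ∈ Ico (0:ℝ) 1, (1:ℝ) - x ≠ 0 := fun x hx => by
      have : x < 1 := hx.2; intro h; linarith [this]
    have hDne : ∀ x ∈ Ico (0:ℝ) 1, Daux p b x ≠ 0 := fun x hx => (denom_pos hppos hx).ne'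
    apply ContinuousOn.mono (s := Ico (0:ℝ) 1) _ hsubI
    apply ContinuousOn.sub _ (gaux_contOn ha0 hb0 hpc hppos)
    apply ContinuousOn.mul continuousOn_const
    apply ContinuousOn.add
    · exact (continuousOn_const.mul ((continuous_const.sub continuous_id).continuousOn.rpow_const
        (fun x hx => Or.inl (h1 x hx)))).neg.mul
        ((Daux_contOn hpc).inv₀ hDne)
    · exact ((continuous_const.sub continuous_id).continuousOn.rpow_const
        (fun x hx => Or.inl (h1 x hx))).mul
        (((Daux'_contOn hpc hp'c).neg).div ((Daux_contOn hpc).pow 2)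
          (fun x hx => pow_ne_zero 2 (hDne x hx)))
  have hint : IntervalIntegrable G' volume M₀ M := by
    have := hG'cont
    rw [← uIcc_of_le hM0] at this
    exact this.intervalIntegrable
  have heq : (∫ u in M₀..M, G' u)
      = (2/c * ((1 - M) ^ (1 + κ) * (Daux p b M)⁻¹) - Iaux p a b M)
        - (2/c * ((1 - M₀) ^ (1 + κ) * (Daux p b M₀)⁻¹) - Iaux p a b M₀) :=
    intervalIntegral.integral_eq_sub_of_hasDerivAt
      (fun u hu => hG u (by rwa [uIcc_of_le hM0] at hu)) hint
  have hnn : 0 ≤ ∫ u in M₀..M, G' u := by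
    refine intervalIntegral.integral_nonneg hM0 fun u hu => ?_
    have hu' := hsub hu
    have huI := hsubI hu
    have h1u : 0 < 1 - u := by linarith [hu'.2]
    have hDpos : 0 < Daux p b u := denom_pos hppos huI
    have hφpos : 0 < (Daux p b u)⁻¹ := inv_pos.mpr hDpos
    have hkey := key_ineq (p := p) (p' := p') hu' (hppos u huI) hκ hc
      (by linarith : (0:ℝ) ≤ b) (hsl u ⟨hu.1, hu'.2⟩)
    have hcancel : (1 - u) ^ (1 + κ) * (1 - u) ^ (-1 - κ) = 1 := by
      rw [← Real.rpow_add h1u]; norm_num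
    have hTpos : 0 < (1 - u) ^ (1 + κ) := Real.rpow_pos_of_pos h1u _
    have hstep : c * (Daux p b u)⁻¹
        ≤ (1 - u) ^ (1 + κ) * (-(Daux' p p' b u) / (Daux p b u) ^ 2) := by
      have h2 := mul_le_mul_of_nonneg_left hkey hTpos.le
      calc c * (Daux p b u)⁻¹
          = (1 - u) ^ (1 + κ) * (c * (1 - u) ^ (-1 - κ) * (Daux p b u)⁻¹) := by
            rw [show (1 - u) ^ (1 + κ) * (c * (1 - u) ^ (-1 - κ) * (Daux p b u)⁻¹)
              = ((1 - u) ^ (1 + κ) * (1 - u) ^ (-1 - κ)) * (c * (Daux p b u)⁻¹) by ring,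
              hcancel, one_mul]
        _ ≤ _ := h2
    have hgφ : gaux p a b u ≤ (Daux p b u)⁻¹ := by
      have hua : u ^ a ≤ 1 := Real.rpow_le_one hu'.1.le hu'.2.le (by linarith)
      have hrw : gaux p a b u = u ^ a * (Daux p b u)⁻¹ := by
        rw [gaux, Daux, div_eq_mul_inv]
      rw [hrw]
      nlinarith [hφpos]
    have hsm := hsmall u ⟨hu.1, hu'.2⟩
    have e1 := mul_le_mul_of_nonneg_left hstep (by positivity : (0:ℝ) ≤ 2/c)
    have e2 : 2/c * (c * (Daux p b u)⁻¹) = 2 * (Daux p b u)⁻¹ := by field_simp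
    have e3 := mul_le_mul_of_nonneg_right hsm hφpos.le
    show 0 ≤ 2/c * (-((1 + κ) * (1 - u) ^ ((1 + κ) - 1)) * (Daux p b u)⁻¹
      + (1 - u) ^ (1 + κ) * (-(Daux' p p' b u) / (Daux p b u) ^ 2)) - gaux p a b u
    rw [show (1:ℝ) + κ - 1 = κ by ring]
    have f1 : 2 * (Daux p b u)⁻¹
        ≤ 2/c * ((1 - u) ^ (1 + κ) * (-(Daux' p p' b u) / (Daux p b u) ^ 2)) := by
      rw [← e2]; exact e1
    have f2 : 2/c * (-((1 + κ) * (1 - u) ^ κ) * (Daux p b u)⁻¹)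
        = -(2 * (1 + κ) / c * (1 - u) ^ κ * (Daux p b u)⁻¹) := by ring
    rw [mul_add]
    linarith [f1, e3, hgφ, f2]
  rw [heq] at hnn
  have h1M₀ : 0 < 1 - M₀ := by linarith [hM0, hM1]
  have hpos0 : 0 ≤ 2/c * ((1 - M₀) ^ (1 + κ) * (Daux p b M₀)⁻¹) := by
    have hD := denom_pos (b := b) hppos ⟨(by linarith : (0:ℝ) ≤ M₀), (by linarith : M₀ < 1)⟩
    rw [Daux]
    positivity
  linarith [hnn, hpos0]

lemma log_bound (hpc : ContinuousOn p (Icc 0 1)) (hppos : ∀ M ∈ Ico (0:ℝ) 1, 0 < p M)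
    (hp' : ∀ M ∈ Ico (0:ℝ) 1, HasDerivWithinAt p (p' M) (Ico 0 1) M)
    (hp'c : ContinuousOn p' (Ico 0 1)) (hκ : 0 < κ) (hc : 0 < c)
    {M₀ M : ℝ} (hM₀ : 1/2 < M₀) (hM0 : M₀ ≤ M) (hM1 : M < 1)
    (hsl : ∀ s ∈ Ico M₀ (1:ℝ), p' s ≤ -((c/2) * (1 - s) ^ (-1 - κ) * p s)) :
    Real.log (p M) + c/(2*κ) * (1 - M) ^ (-κ)
      ≤ Real.log (p M₀) + c/(2*κ) * (1 - M₀) ^ (-κ) := by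
  have hsub : Icc M₀ M ⊆ Ioo (0:ℝ) 1 :=
    fun u hu => ⟨by linarith [hu.1], lt_of_le_of_lt hu.2 hM1⟩
  have hsubI : Icc M₀ M ⊆ Ico (0:ℝ) 1 := fun u hu => ⟨(hsub hu).1.le, (hsub hu).2⟩
  set L' : ℝ → ℝ := fun u => p' u / p u + c/(2*κ) * -(-κ * (1 - u) ^ (-κ - 1)) with hL'
  have hL : ∀ u ∈ Icc M₀ M,
      HasDerivAt (fun v => Real.log (p v) + c/(2*κ) * (1 - v) ^ (-κ)) (L' u) u := by
    intro u hu
    have hu' := hsub hu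
    exact ((p_hasDerivAt hp' hu').log (hppos u (hsubI hu)).ne').add
      ((onesub_rpow_hasDerivAt (r := -κ) hu'.2).const_mul (c/(2*κ)))
  have hL'cont : ContinuousOn L' (Icc M₀ M) := by
    have h1 : ∀ x ∈ Ico (0:ℝ) 1, (1:ℝ) - x ≠ 0 := fun x hx => by
      have : x < 1 := hx.2; intro h; linarith [this]
    apply ContinuousOn.mono (s := Ico (0:ℝ) 1) _ hsubI
    apply ContinuousOn.add
    · exact hp'c.div (p_contOn_Ico hpc) (fun x hx => (hppos x hx).ne')
    · exact continuousOn_const.mul (continuousOn_const.mul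
        ((continuous_const.sub continuous_id).continuousOn.rpow_const
        (fun x hx => Or.inl (h1 x hx)))).neg
  have hint : IntervalIntegrable L' volume M₀ M := by
    have := hL'cont
    rw [← uIcc_of_le hM0] at this
    exact this.intervalIntegrable
  have heq : (∫ u in M₀..M, L' u)
      = (Real.log (p M) + c/(2*κ) * (1 - M) ^ (-κ))
        - (Real.log (p M₀) + c/(2*κ) * (1 - M₀) ^ (-κ)) :=
    intervalIntegral.integral_eq_sub_of_hasDerivAt
      (fun u hu => hL u (by rwa [uIcc_of_le hM0] at hu)) hint
  have hnp : (∫ u in M₀..M, L' u) ≤ 0 := by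
    have h0 : 0 ≤ ∫ u in M₀..M, -L' u := by
      refine intervalIntegral.integral_nonneg hM0 fun u hu => ?_
      have hu' := hsub hu
      have h1u : 0 < 1 - u := by linarith [hu'.2]
      have hpu := hppos u (hsubI hu)
      have hslu := hsl u ⟨hu.1, hu'.2⟩
      have h2 : p' u / p u ≤ -((c/2) * (1 - u) ^ (-1 - κ)) := by
        rw [div_le_iff₀ hpu]
        calc p' u ≤ -((c/2) * (1 - u) ^ (-1 - κ) * p u) := hslu
          _ = -((c/2) * (1 - u) ^ (-1 - κ)) * p u := by ring
      have h3 : c/(2*κ) * -(-κ * (1 - u) ^ (-κ - 1)) = c/2 * (1 - u) ^ (-κ - 1) := by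
        field_simp
      have h4 : (-κ : ℝ) - 1 = -1 - κ := by ring
      simp only [hL', neg_add, h3]
      rw [h4]
      linarith [h2]
    rw [intervalIntegral.integral_neg] at h0
    linarith
  rw [heq] at hnp
  linarith

lemma psq_tendsto (hpc : ContinuousOn p (Icc 0 1)) (hppos : ∀ M ∈ Ico (0:ℝ) 1, 0 < p M)
    (hp' : ∀ M ∈ Ico (0:ℝ) 1, HasDerivWithinAt p (p' M) (Ico 0 1) M)
    (hp'c : ContinuousOn p' (Ico 0 1)) (hκ : 0 < κ) (hc : 0 < c)
    {M₀ : ℝ} (hM₀ : 1/2 < M₀) (hM₀1 : M₀ < 1)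
    (hsl : ∀ s ∈ Ico M₀ (1:ℝ), p' s ≤ -((c/2) * (1 - s) ^ (-1 - κ) * p s)) :
    Filter.Tendsto (fun M => p M ^ 2 * (1 - M) ^ (-1 - κ))
      (nhdsWithin 1 (Iio 1)) (nhds 0) := by
  set A : ℝ := Real.log (p M₀) + c/(2*κ) * (1 - M₀) ^ (-κ) with hA
  set t : ℝ → ℝ := fun M => (1 - M) ^ (-κ) with ht
  have htt : Filter.Tendsto t (nhdsWithin 1 (Iio 1)) Filter.atTop := by
    have h1 : Filter.Tendsto (fun M : ℝ => (1 - M) ^ κ) (nhdsWithin 1 (Iio 1))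
        (nhdsWithin 0 (Ioi 0)) := by
      rw [tendsto_nhdsWithin_iff]
      constructor
      · have h2 : Filter.Tendsto (fun M : ℝ => 1 - M) (nhdsWithin 1 (Iio 1)) (nhds 0) := by
          have hcont : Continuous (fun M : ℝ => 1 - M) := continuous_const.sub continuous_id
          have := (hcont.tendsto (1:ℝ)).mono_left (nhdsWithin_le_nhds (s := Iio (1:ℝ)))
          simpa using this
        have h3 : ContinuousAt (fun x : ℝ => x ^ κ) 0 :=
          Real.continuousAt_rpow_const 0 κ (Or.inr hκ.le)
        have h4 := h3.tendsto.comp h2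
        rwa [Real.zero_rpow hκ.ne'] at h4
      · filter_upwards [eventually_mem_nhdsWithin] with M hM
        exact Real.rpow_pos_of_pos (by simp at hM; linarith) κ
    have h5 := h1.inv_tendsto_nhdsGT_zero
    apply h5.congr'
    filter_upwards [eventually_mem_nhdsWithin] with M hM
    have h1M : (0:ℝ) ≤ 1 - M := by simp at hM; linarith
    simp only [Pi.inv_apply, ht]
    rw [Real.rpow_neg h1M]
  have hU : Filter.Tendsto
      (fun M => Real.exp (2*A) * (t M ^ ((1+κ)/κ) * Real.exp (-(2*(c/(2*κ))) * t M)))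
      (nhdsWithin 1 (Iio 1)) (nhds 0) := by
    have h6 := (tendsto_rpow_mul_exp_neg_mul_atTop_nhds_zero ((1+κ)/κ) (2*(c/(2*κ)))
      (by positivity)).comp htt
    have h7 := h6.const_mul (Real.exp (2*A))
    simpa using h7
  apply squeeze_zero' ?_ ?_ hU
  · filter_upwards [eventually_mem_nhdsWithin] with M hM
    have h1M : (0:ℝ) < 1 - M := by simp at hM; linarith
    positivity
  · filter_upwards [eventually_mem_nhdsWithin,
      ((eventually_ge_nhds hM₀1).filter_mono nhdsWithin_le_nhds : ∀ᶠ M in nhdsWithin 1 (Iio 1), M₀ ≤ M)] with M hM hMM₀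
    have hM1 : M < 1 := by simpa using hM
    have h1M : (0:ℝ) < 1 - M := by linarith
    have hpM := hppos M ⟨by linarith, hM1⟩
    have hlog := log_bound hpc hppos hp' hp'c hκ hc hM₀ hMM₀ hM1 hsl
    have hpMle : p M ≤ Real.exp (A - c/(2*κ) * t M) := by
      calc p M = Real.exp (Real.log (p M)) := (Real.exp_log hpM).symm
        _ ≤ Real.exp (A - c/(2*κ) * t M) := by
            apply Real.exp_le_exp.mpr
            simp only [ht, hA] at hlog ⊢
            linarith
    have hsq : p M ^ 2 ≤ Real.exp (2*A) * Real.exp (-(2*(c/(2*κ))) * t M) := by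
      have := mul_le_mul hpMle hpMle hpM.le (Real.exp_nonneg _)
      calc p M ^ 2 = p M * p M := sq (p M) ▸ (by ring)
        _ ≤ Real.exp (A - c/(2*κ) * t M) * Real.exp (A - c/(2*κ) * t M) := this
        _ = Real.exp (2*A) * Real.exp (-(2*(c/(2*κ))) * t M) := by
            rw [← Real.exp_add, ← Real.exp_add]
            ring_nf
    have hrw : (1 - M) ^ (-1 - κ) = t M ^ ((1+κ)/κ) := by
      simp only [ht]
      rw [← Real.rpow_mul h1M.le]
      congr 1
      field_simp
      ring
    rw [hrw]
    have htpos : 0 ≤ t M ^ ((1+κ)/κ) := Real.rpow_nonneg (Real.rpow_nonneg h1M.le _) _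
    calc p M ^ 2 * t M ^ ((1+κ)/κ)
        ≤ (Real.exp (2*A) * Real.exp (-(2*(c/(2*κ))) * t M)) * t M ^ ((1+κ)/κ) :=
          mul_le_mul_of_nonneg_right hsq htpos
      _ = Real.exp (2*A) * (t M ^ ((1+κ)/κ) * Real.exp (-(2*(c/(2*κ))) * t M)) := by ring



lemma qfun_eq (hppos : ∀ M ∈ Ico (0:ℝ) 1, 0 < p M) {M : ℝ} (hM : M ∈ Ioo (0:ℝ) 1) :
    qfun p a b M / p M = Iaux p a b M / M := by
  have hpM : p M ≠ 0 := (hppos M ⟨hM.1.le, hM.2⟩).ne'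
  have hM0 : M ≠ 0 := hM.1.ne'
  have h : qfun p a b M = p M / M * Iaux p a b M := rfl
  rw [h]
  field_simp

lemma ratio_formula (ha0 : 0 < a) (hb0 : 0 < b) (hpc : ContinuousOn p (Icc 0 1))
    (hppos : ∀ M ∈ Ico (0:ℝ) 1, 0 < p M) {x : ℝ} (hx : x ∈ Ioo (0:ℝ) 1) :
    deriv (fun M => Real.sqrt (qfun p a b M / p M)) x / Real.sqrt (qfun p a b x / p x)
      = (x * gaux p a b x - Iaux p a b x) / (2 * x * Iaux p a b x) := by
  have hx0 : 0 < x := hx.1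
  have hIx : 0 < Iaux p a b x := Iaux_pos ha0 hb0 hpc hppos hx
  have huval : 0 < Iaux p a b x / x := div_pos hIx hx0
  have hu : HasDerivAt (fun M => Iaux p a b M / M)
      ((gaux p a b x * x - Iaux p a b x * 1) / x ^ 2) x :=
    (Iaux_hasDerivAt ha0 hb0 hpc hppos hx).div (hasDerivAt_id x) hx0.ne'
  have hf : HasDerivAt (fun M => Real.sqrt (Iaux p a b M / M))
      (((gaux p a b x * x - Iaux p a b x * 1) / x ^ 2) /
        (2 * Real.sqrt (Iaux p a b x / x))) x := hu.sqrt huval.ne'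
  have heqf : (fun M => Real.sqrt (qfun p a b M / p M))
      =ᶠ[nhds x] (fun M => Real.sqrt (Iaux p a b M / M)) := by
    filter_upwards [isOpen_Ioo.mem_nhds hx] with M hM
    rw [qfun_eq hppos hM]
  have hderiv : deriv (fun M => Real.sqrt (qfun p a b M / p M)) x
      = ((gaux p a b x * x - Iaux p a b x * 1) / x ^ 2) /
        (2 * Real.sqrt (Iaux p a b x / x)) := by
    rw [heqf.deriv_eq, hf.deriv]
  rw [hderiv, qfun_eq hppos hx]
  set S := Real.sqrt (Iaux p a b x / x) with hS
  have hSpos : 0 < S := Real.sqrt_pos.mpr huval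
  have hSS : S * S = Iaux p a b x / x := Real.mul_self_sqrt huval.le
  rw [div_div]
  rw [show 2 * S * S = 2 * (Iaux p a b x / x) by rw [mul_assoc, hSS]]
  rw [div_div]
  congr 1
  · ring
  · field_simp


end helpers

theorem f_log_deriv_lower_bound (a b : ℝ) (ha : 1 ≤ a) (hb : 1 ≤ b)
    (p p' : ℝ → ℝ) (hpc : ContinuousOn p (Icc 0 1))
    (hpa : AntitoneOn p (Icc 0 1)) (hp1 : p 1 = 0)
    (hppos : ∀ M ∈ Ico (0:ℝ) 1, 0 < p M)
    (hp' : ∀ M ∈ Ico (0:ℝ) 1, HasDerivWithinAt p (p' M) (Ico 0 1) M)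
    (hp'c : ContinuousOn p' (Ico 0 1))
    (κ c : ℝ) (hκ : 0 < κ) (hc : 0 < c)
    (hlim : Filter.Tendsto (fun M => -((1 - M) ^ (1 + κ) * p' M / p M))
      (nhdsWithin 1 (Iio 1)) (nhds c)) :
    ∃ C₄ > (0:ℝ), ∀ x ∈ Ioo (1/2 : ℝ) 1,
      C₄ * (1 - x) ^ (-1 - κ) ≤
        deriv (fun M => Real.sqrt (qfun p a b M / p M)) x /
          Real.sqrt (qfun p a b x / p x) := by
  have ha0 : (0:ℝ) < a := by linarith only [ha]
  have hb0 : (0:ℝ) < b := by linarith only [hb]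
  -- Step 1 : choose M₀
  have hev1 : ∀ᶠ M in nhdsWithin 1 (Iio 1), c/2 < -((1 - M) ^ (1 + κ) * p' M / p M) :=
    hlim.eventually (eventually_gt_nhds (by linarith only [hc]))
  have hev2 : ∀ᶠ M in nhdsWithin 1 (Iio 1), 2 * (1 + κ) / c * (1 - M) ^ κ ≤ 1 := by
    have h := (onesub_kappa_tendsto hκ).const_mul (2 * (1 + κ) / c)
    rw [mul_zero] at h
    exact h.eventually (eventually_le_nhds one_pos)
  have hev3 : ∀ᶠ M in nhdsWithin 1 (Iio 1), (1/2 : ℝ) < M :=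
    (eventually_gt_nhds (by norm_num)).filter_mono nhdsWithin_le_nhds
  obtain ⟨l, hl, hlsub⟩ := (mem_nhdsLT_iff_exists_Ioo_subset (a := (1:ℝ))).mp
    (eventually_iff.mp (hev1.and (hev2.and hev3)))
  obtain ⟨M₀, hM₀half, hM₀1, hsl, hsmall⟩ :
      ∃ M₀, (1/2 : ℝ) < M₀ ∧ M₀ < 1 ∧
        (∀ s ∈ Ico M₀ (1:ℝ), p' s ≤ -((c/2) * (1 - s) ^ (-1 - κ) * p s)) ∧
        (∀ s ∈ Ico M₀ (1:ℝ), 2 * (1 + κ) / c * (1 - s) ^ κ ≤ 1) := by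
    refine ⟨(max l (1/2) + 1) / 2, ?_, ?_, ?_, ?_⟩
    · have h1 : (1/2:ℝ) ≤ max l (1/2) := le_max_right _ _
      linarith only [h1]
    · have h2 : max l (1/2) < 1 := max_lt hl (by norm_num)
      linarith only [h2]
    · intro s hs
      have hmem : s ∈ Ioo l 1 := by
        have h1 : l ≤ max l (1/2) := le_max_left _ _
        have h2 : max l (1/2) < 1 := max_lt hl (by norm_num)
        exact ⟨by linarith only [h1, h2, hs.1], hs.2⟩
      obtain ⟨h1, -, -⟩ := hlsub hmem
      have h1s : 0 < 1 - s := by linarith only [hs.2]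
      have hs0 : (0:ℝ) ≤ s := by
        have hh1 : (1/2:ℝ) ≤ max l (1/2) := le_max_right _ _
        have hh2 := hs.1
        linarith only [hh1, hh2]
      have hps : 0 < p s := hppos s ⟨hs0, hs.2⟩
      have hT : 0 < (1 - s) ^ (1 + κ) := Real.rpow_pos_of_pos h1s _
      have hTinv : ((1 - s) ^ (1 + κ))⁻¹ = (1 - s) ^ (-1 - κ) := by
        rw [← Real.rpow_neg h1s.le]
        congr 1
        ring
      have h2 : (1 - s) ^ (1 + κ) * p' s / p s < -(c/2) := by linarith only [h1]
      have h3 : (1 - s) ^ (1 + κ) * p' s < -(c/2) * p s := (div_lt_iff₀ hps).mp h2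
      have h4 : p' s < (-(c/2) * p s) / ((1 - s) ^ (1 + κ)) := by
        rw [lt_div_iff₀ hT]
        linarith only [h3]
      have h5 : (-(c/2) * p s) / ((1 - s) ^ (1 + κ))
          = -((c/2) * (1 - s) ^ (-1 - κ) * p s) := by
        rw [div_eq_mul_inv, hTinv]
        ring
      rw [h5] at h4
      exact h4.le
    · intro s hs
      have hmem : s ∈ Ioo l 1 := by
        have h1 : l ≤ max l (1/2) := le_max_left _ _
        have h2 : max l (1/2) < 1 := max_lt hl (by norm_num)
        exact ⟨by linarith only [h1, h2, hs.1], hs.2⟩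
      exact (hlsub hmem).2.1
  clear hlsub hev1 hev2 hev3 hl
  -- constants
  have hM₀mem : M₀ ∈ Ioo (0:ℝ) 1 := ⟨by linarith only [hM₀half], hM₀1⟩
  have hI₀pos : 0 < Iaux p a b M₀ := Iaux_pos ha0 hb0 hpc hppos hM₀mem
  obtain ⟨K, hKdef, hKpos⟩ : ∃ K : ℝ, K = (1/2 : ℝ) ^ a ∧ 0 < K :=
    ⟨(1/2 : ℝ) ^ a, rfl, Real.rpow_pos_of_pos (by norm_num) a⟩
  obtain ⟨C₆, hC₆def, hC₆pos⟩ : ∃ C₆ : ℝ, C₆ = (1 + 2/c) / K ∧ 0 < C₆ :=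
    ⟨(1 + 2/c) / K, rfl, by positivity⟩
  -- Step 2 : choose M₁
  have hev4 : ∀ᶠ x in nhdsWithin 1 (Iio 1),
      p x ^ 2 * (1 - x) ^ (-1 - κ) ≤ (Iaux p a b M₀)⁻¹ := by
    have h := psq_tendsto hpc hppos hp' hp'c hκ hc hM₀half hM₀1 hsl
    exact h.eventually (eventually_le_nhds (by positivity))
  have hev5 : ∀ᶠ x in nhdsWithin 1 (Iio 1), (1 - x) ^ (1 + κ) ≤ 1 / (4 * C₆) := by
    have h2 : Filter.Tendsto (fun M : ℝ => (1 - M) ^ (1 + κ)) (nhdsWithin 1 (Iio 1))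
        (nhds 0) := onesub_kappa_tendsto (by linarith only [hκ])
    exact h2.eventually (eventually_le_nhds (by positivity))
  have hev6 : ∀ᶠ x in nhdsWithin 1 (Iio 1), M₀ < x :=
    (eventually_gt_nhds hM₀1).filter_mono nhdsWithin_le_nhds
  obtain ⟨l', hl', hl'sub⟩ := (mem_nhdsLT_iff_exists_Ioo_subset (a := (1:ℝ))).mp
    (eventually_iff.mp (hev4.and (hev5.and hev6)))
  obtain ⟨M₁, hM₀M₁, hM₁1, htail⟩ :
      ∃ M₁, M₀ < M₁ ∧ M₁ < 1 ∧ ∀ x, M₁ < x → x < 1 →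
        p x ^ 2 * (1 - x) ^ (-1 - κ) ≤ (Iaux p a b M₀)⁻¹ ∧
        (1 - x) ^ (1 + κ) ≤ 1 / (4 * C₆) ∧ M₀ < x := by
    have hmax1 : max l' M₀ < 1 := max_lt hl' hM₀1
    have hle1 : l' ≤ max l' M₀ := le_max_left _ _
    have hle2 : M₀ ≤ max l' M₀ := le_max_right _ _
    refine ⟨(max l' M₀ + 1) / 2, by linarith only [hle2, hmax1],
      by linarith only [hmax1],
      fun x h1 h2 => hl'sub ⟨by linarith only [hle1, hmax1, h1], h2⟩⟩
  clear hl'sub hev4 hev5 hev6 hl'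
  have hM₁half : (1/2:ℝ) < M₁ := by linarith only [hM₀half, hM₀M₁]
  -- define C₄
  obtain ⟨δ, hδdef, hδpos⟩ :
      ∃ δ : ℝ, δ = (1/4) * (gaux p a b (1/2) - gaux p a b (1/4)) ∧ 0 < δ := by
    refine ⟨_, rfl, ?_⟩
    have h := delta_pos (p := p) (a := a) (b := b) ha0 hb0.le hpa hppos
    linarith only [h]
  have hM₁mem : M₁ ∈ Ioo (0:ℝ) 1 := ⟨by linarith only [hM₁half], hM₁1⟩
  have hI₁pos : 0 < Iaux p a b M₁ := Iaux_pos ha0 hb0 hpc hppos hM₁mem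
  have h1M₁ : 0 < 1 - M₁ := by linarith only [hM₁1]
  obtain ⟨Cmid, hCmiddef, hCmidpos⟩ :
      ∃ Cmid : ℝ, Cmid = δ / (2 * Iaux p a b M₁) * (1 - M₁) ^ (1 + κ) ∧ 0 < Cmid := by
    refine ⟨_, rfl, ?_⟩
    have h := Real.rpow_pos_of_pos h1M₁ (1 + κ)
    positivity
  obtain ⟨C₇, hC₇def, hC₇pos⟩ : ∃ C₇ : ℝ, C₇ = 1 / (8 * C₆) ∧ 0 < C₇ :=
    ⟨1 / (8 * C₆), rfl, by positivity⟩
  refine ⟨min Cmid C₇, by positivity, fun x hx => ?_⟩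
  obtain ⟨hx12, hx1⟩ := hx
  have hxmem : x ∈ Ioo (0:ℝ) 1 := ⟨by linarith only [hx12], hx1⟩
  have hxI : x ∈ Ico (0:ℝ) 1 := ⟨by linarith only [hx12], hx1⟩
  have h1x : 0 < 1 - x := by linarith only [hx1]
  have hIx : 0 < Iaux p a b x := Iaux_pos ha0 hb0 hpc hppos hxmem
  have hgxnn : 0 ≤ gaux p a b x := gaux_nonneg hppos hxI
  have hEpos : 0 < (1 - x) ^ (-1 - κ) := Real.rpow_pos_of_pos h1x _
  have hTpos : 0 < (1 - x) ^ (1 + κ) := Real.rpow_pos_of_pos h1x _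
  have hTE : (1 - x) ^ (1 + κ) * (1 - x) ^ (-1 - κ) = 1 := by
    rw [← Real.rpow_add h1x]
    norm_num
  rw [ratio_formula ha0 hb0 hpc hppos hxmem]
  have h2xI : 0 < 2 * x * Iaux p a b x := by
    have : 0 < 2 * x := by linarith only [hx12]
    exact mul_pos this hIx
  rw [le_div_iff₀ h2xI]
  rcases le_or_gt x M₁ with hcase | hcase
  · -- middle region
    have hnum := middle_bound ha0 hb0 hpc hpa hppos (x := x) ⟨hx12.le, hx1⟩
    have hImono : Iaux p a b x ≤ Iaux p a b M₁ :=
      Iaux_mono ha0 hb0 hpc hppos hxI ⟨by linarith only [hM₁half], hM₁1⟩ hcase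
    have hEbound : (1 - x) ^ (-1 - κ) ≤ (1 - M₁) ^ (-1 - κ) :=
      Real.rpow_le_rpow_of_nonpos h1M₁ (by linarith only [hcase])
        (by linarith only [hκ])
    have hE₁T : (1 - M₁) ^ (-1 - κ) * (1 - M₁) ^ (1 + κ) = 1 := by
      rw [← Real.rpow_add h1M₁]
      norm_num
    have hstep1 : min Cmid C₇ * (1 - x) ^ (-1 - κ) * (2 * x * Iaux p a b x)
        ≤ Cmid * (1 - M₁) ^ (-1 - κ) * (2 * 1 * Iaux p a b M₁) := by
      have h1 : min Cmid C₇ ≤ Cmid := min_le_left _ _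
      have hfac : 2 * x * Iaux p a b x ≤ 2 * 1 * Iaux p a b M₁ :=
        mul_le_mul (by linarith only [hx1] : 2 * x ≤ 2 * 1) hImono hIx.le (by norm_num)
      have hfac2 : min Cmid C₇ * (1 - x) ^ (-1 - κ)
          ≤ Cmid * (1 - M₁) ^ (-1 - κ) :=
        mul_le_mul h1 hEbound hEpos.le hCmidpos.le
      exact mul_le_mul hfac2 hfac h2xI.le
        (mul_nonneg hCmidpos.le (Real.rpow_pos_of_pos h1M₁ _).le)
    have h2I : (2 * Iaux p a b M₁ : ℝ) ≠ 0 := by positivity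
    have hstep2 : Cmid * (1 - M₁) ^ (-1 - κ) * (2 * 1 * Iaux p a b M₁) = δ := by
      calc Cmid * (1 - M₁) ^ (-1 - κ) * (2 * 1 * Iaux p a b M₁)
          = δ * ((1 - M₁) ^ (-1 - κ) * (1 - M₁) ^ (1 + κ))
            * ((2 * Iaux p a b M₁) / (2 * Iaux p a b M₁)) := by rw [hCmiddef]; ring
        _ = δ := by rw [hE₁T, div_self h2I]; ring
    rw [hstep2] at hstep1
    linarith only [hstep1, hnum, hδdef]
  · -- tail region
    obtain ⟨hii, hiii, hM₀x⟩ := htail x hcase hx1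
    have hIb := tail_integral_bound ha hb hpc hppos hp' hp'c hκ hc hM₀half hM₀x.le hx1
      hsl hsmall
    have hpx : 0 < p x := hppos x hxI
    have hDx : 0 < Daux p b x := by
      have h := denom_pos (b := b) hppos hxI
      rw [Daux]; exact h
    -- Iaux M₀ ≤ B
    have hI₀B : Iaux p a b M₀ ≤ (1 - x) ^ (1 + κ) * (Daux p b x)⁻¹ := by
      have hp2 : (0:ℝ) < p x ^ 2 := by positivity
      have hDle : Daux p b x ≤ p x ^ 2 := by
        have h1 : (1 - x) ^ b ≤ 1 := Real.rpow_le_one h1x.le (by linarith only [hx12]) hb0.le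
        have h2 := mul_le_mul_of_nonneg_right h1 hp2.le
        rw [Daux]
        linarith only [h2]
      have hinv : (p x ^ 2)⁻¹ ≤ (Daux p b x)⁻¹ := inv_anti₀ hDx hDle
      have hETpos : 0 < p x ^ 2 * (1 - x) ^ (-1 - κ) := by positivity
      have h2 : Iaux p a b M₀ ≤ (p x ^ 2 * (1 - x) ^ (-1 - κ))⁻¹ := by
        have h3 := inv_anti₀ hETpos hii
        rwa [inv_inv] at h3
      have h4 : (p x ^ 2 * (1 - x) ^ (-1 - κ))⁻¹ = (1 - x) ^ (1 + κ) * (p x ^ 2)⁻¹ := by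
        rw [mul_inv]
        have hEinv : ((1 - x) ^ (-1 - κ))⁻¹ = (1 - x) ^ (1 + κ) := by
          apply inv_eq_of_mul_eq_one_right
          rw [mul_comm]; exact hTE
        rw [mul_comm, hEinv]
      calc Iaux p a b M₀ ≤ (p x ^ 2 * (1 - x) ^ (-1 - κ))⁻¹ := h2
        _ = (1 - x) ^ (1 + κ) * (p x ^ 2)⁻¹ := h4
        _ ≤ (1 - x) ^ (1 + κ) * (Daux p b x)⁻¹ := mul_le_mul_of_nonneg_left hinv hTpos.le
    have hIC : Iaux p a b x ≤ (1 + 2/c) * ((1 - x) ^ (1 + κ) * (Daux p b x)⁻¹) := by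
      linarith only [hIb, hI₀B]
    have hgaux_eq : gaux p a b x = x ^ a * (Daux p b x)⁻¹ := by
      rw [gaux, Daux, div_eq_mul_inv]
    have hxa : K ≤ x ^ a := by
      rw [hKdef]
      exact Real.rpow_le_rpow (by norm_num) hx12.le ha0.le
    have hBg : K * ((1 - x) ^ (1 + κ) * (Daux p b x)⁻¹)
        ≤ (1 - x) ^ (1 + κ) * gaux p a b x := by
      rw [hgaux_eq]
      have h1 := mul_le_mul_of_nonneg_right hxa
        (by positivity : (0:ℝ) ≤ (1 - x) ^ (1 + κ) * (Daux p b x)⁻¹)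
      nlinarith only [h1]
    have hIC₂ : Iaux p a b x ≤ C₆ * ((1 - x) ^ (1 + κ) * gaux p a b x) := by
      have hKne : K ≠ 0 := hKpos.ne'
      have h1 : (1 + 2/c) * ((1 - x) ^ (1 + κ) * (Daux p b x)⁻¹)
          = C₆ * (K * ((1 - x) ^ (1 + κ) * (Daux p b x)⁻¹)) := by
        rw [hC₆def]
        field_simp
      calc Iaux p a b x ≤ (1 + 2/c) * ((1 - x) ^ (1 + κ) * (Daux p b x)⁻¹) := hIC
        _ = C₆ * (K * ((1 - x) ^ (1 + κ) * (Daux p b x)⁻¹)) := h1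
        _ ≤ C₆ * ((1 - x) ^ (1 + κ) * gaux p a b x) :=
            mul_le_mul_of_nonneg_left hBg hC₆pos.le
    have hEI : (1 - x) ^ (-1 - κ) * Iaux p a b x ≤ C₆ * gaux p a b x := by
      calc (1 - x) ^ (-1 - κ) * Iaux p a b x
          ≤ (1 - x) ^ (-1 - κ) * (C₆ * ((1 - x) ^ (1 + κ) * gaux p a b x)) :=
            mul_le_mul_of_nonneg_left hIC₂ hEpos.le
        _ = C₆ * (((1 - x) ^ (1 + κ) * (1 - x) ^ (-1 - κ)) * gaux p a b x) := by ring
        _ = C₆ * gaux p a b x := by rw [hTE, one_mul]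
    have hE4 : 4 * C₆ ≤ (1 - x) ^ (-1 - κ) := by
      have h1 := inv_anti₀ hTpos hiii
      have h2 : ((1 - x) ^ (1 + κ))⁻¹ = (1 - x) ^ (-1 - κ) :=
        inv_eq_of_mul_eq_one_right hTE
      have h3 : ((1:ℝ) / (4 * C₆))⁻¹ = 4 * C₆ := by
        rw [one_div, inv_inv]
      rw [h2, h3] at h1
      exact h1
    have hC₆ne : C₆ ≠ 0 := hC₆pos.ne'
    have hgE : (1 - x) ^ (-1 - κ) * Iaux p a b x / C₆ ≤ gaux p a b x :=
      (div_le_iff₀ hC₆pos).mpr (by linarith only [hEI])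
    have h1 : 4 * C₇ * ((1 - x) ^ (-1 - κ) * Iaux p a b x) ≤ x * gaux p a b x := by
      have he : 4 * C₇ * ((1 - x) ^ (-1 - κ) * Iaux p a b x)
          = (1/2) * ((1 - x) ^ (-1 - κ) * Iaux p a b x / C₆) := by
        rw [hC₇def]
        field_simp
        ring
      rw [he]
      calc (1/2) * ((1 - x) ^ (-1 - κ) * Iaux p a b x / C₆)
          ≤ (1/2) * gaux p a b x := mul_le_mul_of_nonneg_left hgE (by norm_num)
        _ ≤ x * gaux p a b x := mul_le_mul_of_nonneg_right hx12.le hgxnn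
    have hmin : min Cmid C₇ ≤ C₇ := min_le_right _ _
    have h2 : min Cmid C₇ * (1 - x) ^ (-1 - κ) * (2 * x * Iaux p a b x)
        ≤ 2 * C₇ * ((1 - x) ^ (-1 - κ) * Iaux p a b x) := by
      have hfa : 2 * x * Iaux p a b x ≤ 2 * 1 * Iaux p a b x :=
        mul_le_mul_of_nonneg_right (by linarith only [hx1] : 2 * x ≤ 2 * 1) hIx.le
      have hfb : min Cmid C₇ * (1 - x) ^ (-1 - κ) ≤ C₇ * (1 - x) ^ (-1 - κ) :=
        mul_le_mul_of_nonneg_right hmin hEpos.le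
      calc min Cmid C₇ * (1 - x) ^ (-1 - κ) * (2 * x * Iaux p a b x)
          ≤ C₇ * (1 - x) ^ (-1 - κ) * (2 * 1 * Iaux p a b x) :=
            mul_le_mul hfb hfa h2xI.le (mul_nonneg hC₇pos.le hEpos.le)
        _ = 2 * C₇ * ((1 - x) ^ (-1 - κ) * Iaux p a b x) := by ring
    have h3 : Iaux p a b x ≤ 2 * C₇ * ((1 - x) ^ (-1 - κ) * Iaux p a b x) := by
      have hfoo : 1 ≤ 2 * C₇ * (1 - x) ^ (-1 - κ) := by
        have he : (1:ℝ) = 2 * C₇ * (4 * C₆) := by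
          rw [hC₇def]
          field_simp
          ring
        calc (1:ℝ) = 2 * C₇ * (4 * C₆) := he
          _ ≤ 2 * C₇ * (1 - x) ^ (-1 - κ) :=
              mul_le_mul_of_nonneg_left hE4 (by positivity)
      nlinarith only [hIx, hfoo]
    linarith only [h1, h2, h3]
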